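/- arXiv:2311.15501 — 3 statements merged into one kernel-verified Lean document; each statement's English description precedes it below -/
import Mathlib

section
/- The largest eigenvalue λ_1 of the adjacency matrix of the signed graph Γ_{1,r-2} on n vertices is the largest root of the cubic polynomial f(x) = x³ + (3-n)x² + (3-n-r)x + (n+4)r - (r² + n + 7). -/
open Matrix BigOperators

/-- `A` is the adjacency matrix of a signed graph: symmetric, zero diagonal,
entries in `{0, 1, -1}`. -/
def IsSignedAdj {n : ℕ} (A : Matrix (Fin n) (Fin n) ℝ) : Prop :=
  (∀ i j, A i j = A j i) ∧ (∀ i, A i i = 0) ∧ (∀ i j, A i j = 0 ∨ A i j = 1 ∨ A i j = -1)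

/-- The underlying simple graph of the signed graph with adjacency matrix `A`. -/
def graphOf {n : ℕ} (A : Matrix (Fin n) (Fin n) ℝ) : SimpleGraph (Fin n) where
  Adj i j := i ≠ j ∧ A i j ≠ 0 ∧ A j i ≠ 0
  symm := ⟨by intro i j h; exact ⟨h.1.symm, h.2.2, h.2.1⟩⟩
  loopless := ⟨by intro i h; exact h.1 rfl⟩

/-- The sign of a walk: the product of the signs of its edges. -/
def walkSign {n : ℕ} (A : Matrix (Fin n) (Fin n) ℝ) {G : SimpleGraph (Fin n)}
    {u v : Fin n} (w : G.Walk u v) : ℝ :=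
  (w.darts.map fun d => A d.fst d.snd).prod

/-- A signed graph is unbalanced if it has a cycle with sign `-1`. -/
def IsUnbalanced {n : ℕ} (A : Matrix (Fin n) (Fin n) ℝ) : Prop :=
  ∃ (u : Fin n) (w : (graphOf A).Walk u u), w.IsCycle ∧ walkSign A w = -1

/-- Every cycle contained in `S` is positive. -/
def IsBalancedOn {n : ℕ} (A : Matrix (Fin n) (Fin n) ℝ) (S : Set (Fin n)) : Prop :=
  ∀ (u : Fin n) (w : (graphOf A).Walk u u), w.IsCycle → (∀ v ∈ w.support, v ∈ S) →
    walkSign A w = 1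

/-- `S` spans a complete subgraph. -/
def IsCompleteOn {n : ℕ} (A : Matrix (Fin n) (Fin n) ℝ) (S : Set (Fin n)) : Prop :=
  ∀ i ∈ S, ∀ j ∈ S, i ≠ j → A i j ≠ 0

/-- `S` spans an unbalanced complete subgraph. -/
def UnbalancedCompleteOn {n : ℕ} (A : Matrix (Fin n) (Fin n) ℝ) (S : Set (Fin n)) : Prop :=
  IsCompleteOn A S ∧ ∃ (u : Fin n) (w : (graphOf A).Walk u u), w.IsCycle ∧
    (∀ v ∈ w.support, v ∈ S) ∧ walkSign A w = -1

/-- The signed graph contains no unbalanced complete subgraph on `k` vertices. -/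
def KminusFree {n : ℕ} (A : Matrix (Fin n) (Fin n) ℝ) (k : ℕ) : Prop :=
  ¬ ∃ S : Finset (Fin n), S.card = k ∧ UnbalancedCompleteOn A ↑S

/-- The largest eigenvalue of `A`. -/
noncomputable def lam1 {n : ℕ} (A : Matrix (Fin n) (Fin n) ℝ) : ℝ :=
  sSup {μ : ℝ | ∃ x : Fin n → ℝ, x ≠ 0 ∧ A.mulVec x = μ • x}

/-- The signed graph `Γ_{1,r-2}`: vertices `1,…,n-1` form an all-positive complete graph,
vertex `0` is joined to vertex `1` by a negative edge and to vertices `2,…,r-1`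
by positive edges. -/
def GammaMat (n r : ℕ) : Matrix (Fin n) (Fin n) ℝ :=
  Matrix.of fun i j =>
    if i = j then 0
    else if i.val = 0 then (if j.val = 1 then -1 else if j.val < r then 1 else 0)
    else if j.val = 0 then (if i.val = 1 then -1 else if i.val < r then 1 else 0)
    else 1

/-! ### Auxiliary machinery for `stmt2` -/

/-- Class of an index: 0, 1, middle block `[2,r)`, outer block `[r,n)`. -/
def clv (r t : ℕ) : Fin 4 := if t = 0 then 0 else if t = 1 then 1 else if t < r then 2 else 3

/-- Sign pattern between classes. -/
def Bmat : Matrix (Fin 4) (Fin 4) ℝ := !![0,-1,1,0; -1,1,1,1; 1,1,1,1; 0,1,1,1]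

/-- Quotient matrix of the equitable partition. -/
noncomputable def Qmat (n r : ℕ) : Matrix (Fin 4) (Fin 4) ℝ :=
  !![0,-1,(r:ℝ)-2,0; -1,0,(r:ℝ)-2,(n:ℝ)-(r:ℝ); 1,1,(r:ℝ)-3,(n:ℝ)-(r:ℝ);
     0,1,(r:ℝ)-2,(n:ℝ)-(r:ℝ)-1]

lemma det_Q (n r : ℕ) (μ : ℝ) :
    (Qmat n r - μ • 1).det
      = (μ+1) * (μ^3 + (3-(n:ℝ))*μ^2 + (3-(n:ℝ)-(r:ℝ))*μ
          + ((n:ℝ)+4)*(r:ℝ) - ((r:ℝ)^2+(n:ℝ)+7)) := by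
  have h : Qmat n r - μ • 1 =
      !![-μ,-1,(r:ℝ)-2,0; -1,-μ,(r:ℝ)-2,(n:ℝ)-(r:ℝ); 1,1,(r:ℝ)-3-μ,(n:ℝ)-(r:ℝ);
         0,1,(r:ℝ)-2,(n:ℝ)-(r:ℝ)-1-μ] := by
    ext i j
    fin_cases i <;> fin_cases j <;> simp [Qmat, Matrix.one_apply]
  rw [h, Matrix.det_succ_row_zero]
  simp [Fin.sum_univ_succ, Matrix.det_fin_three, Matrix.submatrix, Fin.succAbove]
  ring

lemma sum_classes {n r : ℕ} (hr : 3 ≤ r) (hrn : r < n) (g : Fin 4 → ℝ) :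
    ∑ j : Fin n, g (clv r j.val)
      = g 0 + g 1 + ((r:ℝ)-2) * g 2 + ((n:ℝ)-(r:ℝ)) * g 3 := by
  rw [Fin.sum_univ_eq_sum_range (fun t => g (clv r t)) n]
  have h2r : 2 ≤ r := by omega
  have hrn' : r ≤ n := le_of_lt hrn
  rw [Finset.range_eq_Ico, ← Finset.sum_Ico_consecutive _ (Nat.zero_le r) hrn',
      ← Finset.sum_Ico_consecutive _ (Nat.zero_le 2) h2r]
  have hA : ∑ t ∈ Finset.Ico 0 2, g (clv r t) = g 0 + g 1 := by
    rw [← Finset.range_eq_Ico, Finset.sum_range_succ, Finset.sum_range_succ,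
      Finset.sum_range_zero]
    have h0 : clv r 0 = 0 := by simp [clv]
    have h1 : clv r 1 = 1 := by simp [clv]
    rw [h0, h1]; ring
  have hcB : ∀ t ∈ Finset.Ico 2 r, g (clv r t) = g 2 := by
    intro t ht
    rw [Finset.mem_Ico] at ht
    have : clv r t = 2 := by unfold clv; split_ifs <;> first | rfl | omega
    rw [this]
  have hcC : ∀ t ∈ Finset.Ico r n, g (clv r t) = g 3 := by
    intro t ht
    rw [Finset.mem_Ico] at ht
    have : clv r t = 3 := by unfold clv; split_ifs <;> first | rfl | omega
    rw [this]
  rw [Finset.sum_congr rfl hcB, Finset.sum_congr rfl hcC, hA, Finset.sum_const,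
    Finset.sum_const, Nat.card_Ico, Nat.card_Ico, nsmul_eq_mul, nsmul_eq_mul]
  push_cast [h2r, hrn']
  ring

lemma gamma_entry {n r : ℕ} (i j : Fin n) (hij : i ≠ j) :
    GammaMat n r i j = Bmat (clv r i.val) (clv r j.val) := by
  have hv : i.val ≠ j.val := fun h => hij (Fin.ext h)
  unfold GammaMat clv
  simp only [Matrix.of_apply, if_neg hij]
  split_ifs <;> simp_all [Bmat, Matrix.vecHead, Matrix.vecTail]

lemma mulVec_lift {n r : ℕ} (hr : 3 ≤ r) (hrn : r < n) (v : Fin 4 → ℝ) (i : Fin n) :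
    (GammaMat n r).mulVec (fun j => v (clv r j.val)) i
      = (Qmat n r).mulVec v (clv r i.val) := by
  have key : ∀ j : Fin n, GammaMat n r i j * v (clv r j.val)
      = Bmat (clv r i.val) (clv r j.val) * v (clv r j.val)
        - (if j = i then Bmat (clv r i.val) (clv r i.val) * v (clv r i.val) else 0) := by
    intro j
    by_cases h : j = i
    · subst h
      have : GammaMat n r j j = 0 := by simp [GammaMat]
      rw [this]; simp
    · rw [gamma_entry i j (fun hh => h hh.symm)]; simp [h]
  show ∑ j, GammaMat n r i j * v (clv r j.val) = _
  rw [Finset.sum_congr rfl (fun j _ => key j), Finset.sum_sub_distrib,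
    Finset.sum_ite_eq' Finset.univ i
      (fun _ => Bmat (clv r i.val) (clv r i.val) * v (clv r i.val)),
    if_pos (Finset.mem_univ i),
    sum_classes hr hrn (fun k => Bmat (clv r i.val) k * v k)]
  generalize clv r i.val = c
  fin_cases c <;>
    simp [Qmat, Bmat, Matrix.mulVec, dotProduct, Fin.sum_univ_four,
      Matrix.vecHead, Matrix.vecTail] <;> ring

lemma clv_surj {n r : ℕ} (hr : 3 ≤ r) (hrn : r < n) :
    ∀ c : Fin 4, ∃ i : Fin n, clv r i.val = c := by
  intro c
  have h2 : (2:ℕ) < r := by omega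
  have hr0 : r ≠ 0 := by omega
  have hr1 : r ≠ 1 := by omega
  fin_cases c
  · exact ⟨⟨0, by omega⟩, by simp [clv]⟩
  · exact ⟨⟨1, by omega⟩, by simp [clv]⟩
  · exact ⟨⟨2, by omega⟩, by simp [clv, h2]⟩
  · exact ⟨⟨r, by omega⟩, by simp [clv, hr0, hr1]⟩

/-- Every root of the cubic is an eigenvalue. -/
lemma root_mem {n r : ℕ} (hr : 3 ≤ r) (hrn : r < n) (μ : ℝ)
    (hroot : μ^3 + (3-(n:ℝ))*μ^2 + (3-(n:ℝ)-(r:ℝ))*μ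
      + ((n:ℝ)+4)*(r:ℝ) - ((r:ℝ)^2+(n:ℝ)+7) = 0) :
    ∃ x : Fin n → ℝ, x ≠ 0 ∧ (GammaMat n r).mulVec x = μ • x := by
  have hdet : (Qmat n r - μ • 1).det = 0 := by rw [det_Q, hroot, mul_zero]
  obtain ⟨v, hv, hv0⟩ := (Matrix.exists_mulVec_eq_zero_iff).mpr hdet
  have hQ : (Qmat n r).mulVec v = μ • v := by
    have := hv0
    rw [Matrix.sub_mulVec, Matrix.smul_mulVec, Matrix.one_mulVec, sub_eq_zero] at this
    exact this
  refine ⟨fun j => v (clv r j.val), ?_, ?_⟩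
  · intro hx
    apply hv
    funext c
    obtain ⟨i, hi⟩ := clv_surj hr hrn c
    have := congrFun hx i
    simpa [hi] using this
  · funext i
    rw [mulVec_lift hr hrn v i, hQ]
    simp

lemma row_class2 {n r : ℕ} (i k : Fin n) (h2 : 2 ≤ i.val) (hir : i.val < r) :
    GammaMat n r i k = if i = k then 0 else 1 := by
  unfold GammaMat
  simp only [Matrix.of_apply]
  split_ifs <;> first | rfl | omega

lemma row_class3 {n r : ℕ} (hr : 3 ≤ r) (i k : Fin n) (hir : r ≤ i.val) :
    GammaMat n r i k = if i = k then 0 else if k.val = 0 then 0 else 1 := by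
  unfold GammaMat
  have : i.val ≠ 0 := by omega
  have hik : i = k → (i = k ∧ k.val ≠ 0) ∨ i = k ∧ True := fun h => Or.inr ⟨h, trivial⟩
  simp only [Matrix.of_apply]
  split_ifs <;> first | rfl | omega | (exfalso; omega) | skip
  all_goals simp_all <;> omega

/-- Eigenvalues are `-1` or roots of the cubic. -/
lemma eig_char {n r : ℕ} (hr : 3 ≤ r) (hrn : r < n) (μ : ℝ)
    (x : Fin n → ℝ) (hx : x ≠ 0) (hAx : (GammaMat n r).mulVec x = μ • x) (hμ : μ ≠ -1) :
    μ^3 + (3-(n:ℝ))*μ^2 + (3-(n:ℝ)-(r:ℝ))*μ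
      + ((n:ℝ)+4)*(r:ℝ) - ((r:ℝ)^2+(n:ℝ)+7) = 0 := by
  have hn4 : 4 ≤ n := by omega
  have hμ1 : μ + 1 ≠ 0 := fun h => hμ (by linarith)
  set S : ℝ := ∑ k, x k with hS
  set i0 : Fin n := ⟨0, by omega⟩
  -- rows in the middle class
  have h2 : ∀ i : Fin n, 2 ≤ i.val → i.val < r → (μ + 1) * x i = S := by
    intro i hi2 hir
    have hrow : (GammaMat n r).mulVec x i = S - x i := by
      show ∑ k, GammaMat n r i k * x k = S - x i
      have : ∀ k : Fin n, GammaMat n r i k * x k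
          = x k - (if i = k then x k else 0) := by
        intro k
        rw [row_class2 i k hi2 hir]
        by_cases h : i = k <;> simp [h]
      rw [Finset.sum_congr rfl (fun k _ => this k), Finset.sum_sub_distrib,
        Finset.sum_ite_eq Finset.univ i, if_pos (Finset.mem_univ i)]
    have := congrFun hAx i
    rw [hrow] at this
    have : S - x i = μ * x i := by simpa using this
    linarith
  -- rows in the outer class
  have h3 : ∀ i : Fin n, r ≤ i.val → (μ + 1) * x i = S - x i0 := by
    intro i hir
    have hrow : (GammaMat n r).mulVec x i = S - x i - x i0 := by
      show ∑ k, GammaMat n r i k * x k = S - x i - x i0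
      have : ∀ k : Fin n, GammaMat n r i k * x k
          = x k - (if i = k then x k else 0) - (if i0 = k then x k else 0) := by
        intro k
        rw [row_class3 hr i k hir]
        have hk0 : i0 = k ↔ k.val = 0 := by
          constructor
          · intro h; rw [← h]
          · intro h; exact Fin.ext (by simp [i0, h])
        by_cases h1 : i = k
        · have : ¬ (i0 = k) := fun hh => by
            have : k.val = 0 := hk0.mp hh
            omega
          simp [h1, this]
        · by_cases h2 : k.val = 0
          · simp [h1, h2, hk0.mpr h2]
          · have hne : ¬ i0 = k := fun hh => h2 (hk0.mp hh)
            simp [h1, h2, hne]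
      rw [Finset.sum_congr rfl (fun k _ => this k), Finset.sum_sub_distrib,
        Finset.sum_sub_distrib, Finset.sum_ite_eq Finset.univ i,
        Finset.sum_ite_eq Finset.univ i0, if_pos (Finset.mem_univ i),
        if_pos (Finset.mem_univ i0)]
    have := congrFun hAx i
    rw [hrow] at this
    have : S - x i - x i0 = μ * x i := by simpa using this
    linarith
  -- the eigenvector is constant on classes
  set i1 : Fin n := ⟨1, by omega⟩
  set i2 : Fin n := ⟨2, by omega⟩
  set ir : Fin n := ⟨r, by omega⟩
  set v : Fin 4 → ℝ := ![x i0, x i1, x i2, x ir] with hv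
  have hxv : x = fun j => v (clv r j.val) := by
    funext j
    unfold clv
    split_ifs with hj0 hj1 hj2
    · have : j = i0 := Fin.ext (by simp [i0, hj0])
      rw [this]; simp [v]
    · have : j = i1 := Fin.ext (by simp [i1, hj1])
      rw [this]; simp [v]
    · have e1 : (μ + 1) * x j = S := h2 j (by omega) hj2
      have e2 : (μ + 1) * x i2 = S := h2 i2 (by simp [i2]) (by simp [i2]; omega)
      have : x j = x i2 := mul_left_cancel₀ hμ1 (by rw [e1, e2])
      rw [this]; simp [v]
    · have e1 : (μ + 1) * x j = S - x i0 := h3 j (by omega)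
      have e2 : (μ + 1) * x ir = S - x i0 := h3 ir (by simp [ir])
      have : x j = x ir := mul_left_cancel₀ hμ1 (by rw [e1, e2])
      rw [this]; simp [v]
  have hv0 : v ≠ 0 := by
    intro h
    apply hx
    rw [hxv, h]
    funext j; simp
  have hQ : (Qmat n r).mulVec v = μ • v := by
    funext c
    obtain ⟨i, hi⟩ := clv_surj hr hrn c
    have : (GammaMat n r).mulVec x i = μ • x i := by rw [hAx]; simp
    rw [hxv] at this
    rw [mulVec_lift hr hrn v i] at this
    rw [← hi]
    simpa using this
  -- determinant vanishes
  have hker : (Qmat n r - μ • 1).mulVec v = 0 := by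
    rw [Matrix.sub_mulVec, Matrix.smul_mulVec, Matrix.one_mulVec, hQ, sub_self]
  have hdet : (Qmat n r - μ • 1).det = 0 :=
    (Matrix.exists_mulVec_eq_zero_iff).mp ⟨v, hv0, hker⟩
  rw [det_Q] at hdet
  rcases mul_eq_zero.mp hdet with h | h
  · exact absurd (by linarith) hμ
  · exact h

/-- `λ₁(Γ_{1,r-2})` is the largest root of
`f(x) = x³ + (3-n)x² + (3-n-r)x + (n+4)r - (r²+n+7)`. -/
theorem stmt2 {n r : ℕ} (hr : 3 ≤ r) (hrn : r < n) :
    IsGreatest {x : ℝ | x ^ 3 + (3 - (n : ℝ)) * x ^ 2 + (3 - (n : ℝ) - (r : ℝ)) * x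
        + ((n : ℝ) + 4) * (r : ℝ) - ((r : ℝ) ^ 2 + (n : ℝ) + 7) = 0}
      (lam1 (GammaMat n r)) := by
  have hn4 : 4 ≤ n := by omega
  have hrR : (3:ℝ) ≤ (r:ℝ) := by exact_mod_cast hr
  have hrnR : (r:ℝ) + 1 ≤ (n:ℝ) := by exact_mod_cast hrn
  let F : ℝ → ℝ := fun x => x ^ 3 + (3 - (n : ℝ)) * x ^ 2 + (3 - (n : ℝ) - (r : ℝ)) * x
        + ((n : ℝ) + 4) * (r : ℝ) - ((r : ℝ) ^ 2 + (n : ℝ) + 7)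
  let S : Set ℝ := {μ : ℝ | ∃ x : Fin n → ℝ, x ≠ 0 ∧ (GammaMat n r).mulVec x = μ • x}
  have hlam : lam1 (GammaMat n r) = sSup S := rfl
  have hZS : ∀ μ : ℝ, F μ = 0 → μ ∈ S := fun μ h => root_mem hr hrn μ h
  have hSZ : ∀ μ ∈ S, μ = -1 ∨ F μ = 0 := by
    rintro μ ⟨x, hx, hAx⟩
    by_cases h : μ = -1
    · exact Or.inl h
    · exact Or.inr (eig_char hr hrn μ x hx hAx h)
  have hFn : 0 < F (n:ℝ) := by
    show (0:ℝ) < (n:ℝ) ^ 3 + (3 - (n : ℝ)) * (n:ℝ) ^ 2 + (3 - (n : ℝ) - (r : ℝ)) * (n:ℝ)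
        + ((n : ℝ) + 4) * (r : ℝ) - ((r : ℝ) ^ 2 + (n : ℝ) + 7)
    nlinarith [sq_nonneg ((n:ℝ)-(r:ℝ)), sq_nonneg ((n:ℝ)+(r:ℝ))]
  have hFr2 : F ((r:ℝ)-2) ≤ 0 := by
    show ((r:ℝ)-2) ^ 3 + (3 - (n : ℝ)) * ((r:ℝ)-2) ^ 2 + (3 - (n : ℝ) - (r : ℝ)) * ((r:ℝ)-2)
        + ((n : ℝ) + 4) * (r : ℝ) - ((r : ℝ) ^ 2 + (n : ℝ) + 7) ≤ (0:ℝ)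
    nlinarith [mul_nonneg (mul_nonneg
        (by linarith : (0:ℝ) ≤ (r:ℝ)-3) (by linarith : (0:ℝ) ≤ (n:ℝ)-(r:ℝ)-1))
        (by linarith : (0:ℝ) ≤ (r:ℝ)-1),
      mul_nonneg (by linarith : (0:ℝ) ≤ (r:ℝ)-3) (by linarith : (0:ℝ) ≤ (r:ℝ)-2)]
  have hfinZ : {x : ℝ | F x = 0}.Finite := by
    set p : Polynomial ℝ := Polynomial.X^3 + Polynomial.C (3-(n:ℝ)) * Polynomial.X^2
      + Polynomial.C (3-(n:ℝ)-(r:ℝ)) * Polynomial.X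
      + Polynomial.C (((n:ℝ)+4)*(r:ℝ) - ((r:ℝ)^2+(n:ℝ)+7)) with hp
    have heval : ∀ x : ℝ, p.eval x = F x := by
      intro x
      simp [hp, F]
      ring
    have hp0 : p ≠ 0 := by
      intro h
      have h2 := heval (n:ℝ)
      rw [h] at h2
      simp at h2
      rw [← h2] at hFn
      exact lt_irrefl 0 hFn
    exact (Polynomial.finite_setOf_isRoot hp0).subset (fun x hx => by
      simp only [Set.mem_setOf_eq] at hx ⊢
      rw [Polynomial.IsRoot, heval]
      exact hx)
  have hSfin : S.Finite := by
    apply (hfinZ.insert (-1)).subset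
    intro μ hμ
    rcases hSZ μ hμ with h | h
    · exact Set.mem_insert_iff.mpr (Or.inl h)
    · exact Set.mem_insert_iff.mpr (Or.inr h)
  have hcont : Continuous F := by fun_prop
  have hle : (r:ℝ) - 2 ≤ (n:ℝ) := by linarith
  obtain ⟨μ0, hμ0mem, hμ0F⟩ :=
    intermediate_value_Icc hle hcont.continuousOn ⟨hFr2, le_of_lt hFn⟩
  have hμ0S : μ0 ∈ S := hZS μ0 hμ0F
  have hSne : S.Nonempty := ⟨μ0, hμ0S⟩
  have hbdd : BddAbove S := hSfin.bddAbove
  have hmem : lam1 (GammaMat n r) ∈ S := by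
    rw [hlam]; exact hSne.csSup_mem hSfin
  have hge : (r:ℝ) - 2 ≤ lam1 (GammaMat n r) := by
    rw [hlam]; exact le_trans hμ0mem.1 (le_csSup hbdd hμ0S)
  constructor
  · show F (lam1 (GammaMat n r)) = 0
    rcases hSZ _ hmem with h | h
    · exfalso; rw [h] at hge; linarith
    · exact h
  · intro z hz
    have hzS : z ∈ S := hZS z hz
    rw [hlam]
    exact le_csSup hbdd hzS
end

section
/- Let Γ be a signed graph on n vertices and x a unit eigenvector corresponding to λ_1(Γ). If λ_1(Γ) > n - k, then x has at most k - 2 zero components. -/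
open Matrix BigOperators

/-- If `λ₁(Γ) > n - k`, then a unit eigenvector for `λ₁` has at most `k - 2`
zero components. -/
theorem stmt10 {n k : ℕ} (A : Matrix (Fin n) (Fin n) ℝ) (x : Fin n → ℝ)
    (hA : IsSignedAdj A) (hxu : ∑ i, x i ^ 2 = 1)
    (heig : A.mulVec x = lam1 A • x) (hgt : (n : ℝ) - (k : ℝ) < lam1 A) :
    {i | x i = 0}.ncard ≤ k - 2 := by
  classical
  set μ := lam1 A with hμ
  set Sf : Finset (Fin n) := Finset.univ.filter (fun i => x i ≠ 0) with hSf
  set Zf : Finset (Fin n) := Finset.univ.filter (fun i => x i = 0) with hZf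
  have hsum1 : ∑ i ∈ Sf, x i ^ 2 = 1 := by
    rw [← hxu]
    apply Finset.sum_subset (Finset.subset_univ _)
    intro i _ hi
    simp only [hSf, Finset.mem_filter, Finset.mem_univ, true_and, not_not] at hi
    simp [hi]
  have habs : ∑ i ∈ Sf, |x i| ^ 2 = 1 := by simpa [sq_abs] using hsum1
  -- key bound : μ ≤ card Sf - 1
  have h1 : μ = ∑ i, (A.mulVec x i) * x i := by
    rw [heig]
    simp only [Pi.smul_apply, smul_eq_mul, mul_assoc, ← sq]
    rw [← Finset.mul_sum, hxu, mul_one]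
  have h2 : ∑ i, (A.mulVec x i) * x i = ∑ i ∈ Sf, ∑ j ∈ Sf, A i j * x j * x i := by
    have e1 : ∀ i, (A.mulVec x i) * x i = ∑ j ∈ Sf, A i j * x j * x i := by
      intro i
      have : (A.mulVec x i) * x i = ∑ j, A i j * x j * x i := by
        simp [Matrix.mulVec, dotProduct, Finset.sum_mul]
      rw [this]
      refine (Finset.sum_subset (Finset.subset_univ _) ?_).symm
      intro j _ hj
      simp only [hSf, Finset.mem_filter, Finset.mem_univ, true_and, not_not] at hj
      simp [hj]
    rw [Finset.sum_congr rfl (fun i _ => e1 i)]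
    refine (Finset.sum_subset (Finset.subset_univ _) ?_).symm
    intro i _ hi
    simp only [hSf, Finset.mem_filter, Finset.mem_univ, true_and, not_not] at hi
    simp [hi]
  have h3 : ∑ i ∈ Sf, ∑ j ∈ Sf, A i j * x j * x i
      ≤ ∑ i ∈ Sf, ∑ j ∈ Sf.erase i, |x i| * |x j| := by
    have hdiag : ∀ i ∈ Sf, ∑ j ∈ Sf, A i j * x j * x i
        = ∑ j ∈ Sf.erase i, A i j * x j * x i := by
      intro i hi
      rw [Finset.sum_erase]
      simp [hA.2.1 i]
    rw [Finset.sum_congr rfl hdiag]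
    apply Finset.sum_le_sum
    intro i _
    apply Finset.sum_le_sum
    intro j _
    have hAij : |A i j| ≤ 1 := by
      rcases hA.2.2 i j with h | h | h <;> simp [h]
    calc A i j * x j * x i ≤ |A i j * x j * x i| := le_abs_self _
      _ = |A i j| * (|x i| * |x j|) := by rw [abs_mul, abs_mul]; ring
      _ ≤ 1 * (|x i| * |x j|) := by
          apply mul_le_mul_of_nonneg_right hAij (by positivity)
      _ = |x i| * |x j| := one_mul _
  have h4 : ∑ i ∈ Sf, ∑ j ∈ Sf.erase i, |x i| * |x j|
      = (∑ i ∈ Sf, |x i|) ^ 2 - 1 := by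
    have : ∀ i ∈ Sf, ∑ j ∈ Sf.erase i, |x i| * |x j|
        = |x i| * (∑ j ∈ Sf, |x j|) - |x i| ^ 2 := by
      intro i hi
      rw [← Finset.mul_sum, Finset.sum_erase_eq_sub hi, mul_sub]
      ring
    rw [Finset.sum_congr rfl this, Finset.sum_sub_distrib, habs, ← Finset.sum_mul, sq]
  have h5 : (∑ i ∈ Sf, |x i|) ^ 2 ≤ (Sf.card : ℝ) := by
    calc (∑ i ∈ Sf, |x i|) ^ 2 ≤ Sf.card * ∑ i ∈ Sf, |x i| ^ 2 :=
          sq_sum_le_card_mul_sum_sq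
      _ = Sf.card := by rw [habs, mul_one]
  have key : μ ≤ (Sf.card : ℝ) - 1 := by
    rw [h1, h2]
    linarith [h3, h4, h5]
  -- counting
  have hcard : Sf.card + Zf.card = n := by
    have := Finset.card_filter_add_card_filter_not
      (s := (Finset.univ : Finset (Fin n))) (p := fun i => x i ≠ 0)
    simp only [hSf, hZf, not_not] at this ⊢
    simpa using this
  have hZ : {i | x i = 0}.ncard = Zf.card := by
    rw [show {i | x i = 0} = (↑Zf : Set (Fin n)) by ext i; simp [hZf]]
    exact Set.ncard_coe_finset _
  have hfin : (Zf.card : ℝ) + 1 < k := by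
    have hs : (Sf.card : ℝ) = (n : ℝ) - Zf.card := by
      have : (Sf.card : ℝ) + Zf.card = n := by exact_mod_cast hcard
      linarith
    rw [hs] at key
    linarith
  have hlt : Zf.card + 1 < k := by exact_mod_cast hfin
  omega
end

section
/- Every shortest negative cycle in an unbalanced signed graph whose index exceeds (1/2)(√(n²-8) + n - 4) must be a triangle; equivalently, if an unbalanced signed graph Γ on n vertices has no negative triangle, then λ_1(Γ) ≤ (1/2)(√(n²-8) + n - 4) < n - 2. -/
open Matrix BigOperators

private lemma sgn3 (a b c : ℝ) (ha : a = 1 ∨ a = -1) (hb : b = 1 ∨ b = -1)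
    (hc : c = 1 ∨ c = -1) (h : a * b * c ≠ -1) : b = a * c := by
  rcases ha with rfl | rfl <;> rcases hb with rfl | rfl <;> rcases hc with rfl | rfl <;>
    revert h <;> norm_num

private lemma walkSign_eq {n : ℕ} (A : Matrix (Fin n) (Fin n) ℝ) (τ : Fin n → ℝ)
    (hτ : ∀ i, τ i = 1 ∨ τ i = -1)
    (hedge : ∀ i j, A i j ≠ 0 → A i j = τ i * τ j)
    {u v : Fin n} (w : (graphOf A).Walk u v) : walkSign A w = τ u * τ v := by
  have key : ∀ i, τ i * τ i = 1 := by
    intro i; rcases hτ i with h | h <;> rw [h] <;> norm_num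
  induction w with
  | nil => simp [walkSign, key]
  | @cons a b c h p ih =>
      have he := hedge _ _ h.2.1
      show A a b * walkSign A p = τ a * τ c
      rw [ih, he]
      rcases hτ b with hb | hb <;> rw [hb] <;> ring

private lemma final_arith (nr μ s p q SP SQ t : ℝ)
    (hn3 : 3 ≤ nr)
    (hs0 : 0 ≤ s) (hs2 : s ^ 2 = nr ^ 2 - 8) (hcon : (s + nr - 4) / 2 < μ)
    (hp1 : 1 ≤ p) (hq1 : 1 ≤ q) (hSP0 : 0 ≤ SP) (hSQ0 : 0 ≤ SQ)
    (ht1 : -1 ≤ t) (ht2 : t ≤ 1)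
    (HP : μ * SP + SP + p * SQ ≤ p * (1 + μ + t))
    (HQ : μ * SQ + SQ + q * SP ≤ q * (1 + μ - t))
    (hsum : μ ≤ SP + SQ + (nr - 2 - p - q)) : False := by
  have hsge : nr - 2 ≤ s := by nlinarith [hs2, hs0, hn3]
  have hμ3 : nr - 3 < μ := by linarith
  have e1 : 0 ≤ (p - 1) * SQ := mul_nonneg (by linarith) hSQ0
  have e2 : 0 ≤ (q - 1) * SP := mul_nonneg (by linarith) hSP0
  have e3 : 0 ≤ (p - 1) * (1 - t) := mul_nonneg (by linarith) (by linarith)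
  have e4 : 0 ≤ (q - 1) * (1 + t) := mul_nonneg (by linarith) (by linarith)
  have step1 : μ * SP + μ * SQ + 2 * SP + 2 * SQ ≤ (p + q) * (μ + 2) - 2 := by
    nlinarith [HP, HQ, e1, e2, e3, e4]
  have hμ2 : (0:ℝ) ≤ μ + 2 := by linarith
  have step2 : μ * μ ≤ (nr - 4) * μ + 2 * nr - 6 := by
    have h1 := mul_le_mul_of_nonneg_right hsum hμ2
    nlinarith [h1, step1]
  have h2μ : s < 2 * μ - (nr - 4) := by linarith
  have h3 : s ^ 2 < (2 * μ - (nr - 4)) ^ 2 := by nlinarith [h2μ, hs0]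
  nlinarith [h3, hs2, step2]

private lemma eig_bound {n : ℕ} (hn : 3 ≤ n) (A : Matrix (Fin n) (Fin n) ℝ)
    (hA : IsSignedAdj A) (hunb : IsUnbalanced A)
    (htri : ∀ i j k : Fin n, A i j * A j k * A k i ≠ -1)
    {μ : ℝ} {x : Fin n → ℝ} (hx : x ≠ 0) (he : A.mulVec x = μ • x) :
    μ ≤ (Real.sqrt ((n : ℝ) ^ 2 - 8) + (n : ℝ) - 4) / 2 := by
  classical
  obtain ⟨hsym, hdiag, hval⟩ := hA
  have hn3 : (3:ℝ) ≤ (n:ℝ) := by exact_mod_cast hn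
  set s : ℝ := Real.sqrt ((n:ℝ)^2 - 8) with hsdef
  have hs0 : 0 ≤ s := Real.sqrt_nonneg _
  have hs2 : s ^ 2 = (n:ℝ)^2 - 8 := Real.sq_sqrt (by nlinarith)
  have hsge : (n:ℝ) - 2 ≤ s := by
    have h1 : ((n:ℝ)-2)^2 ≤ (n:ℝ)^2-8 := by nlinarith
    have h2 := Real.sqrt_le_sqrt h1
    rwa [Real.sqrt_sq (by linarith)] at h2
  -- contradiction set-up
  by_contra hcon
  push_neg at hcon
  have hμ3 : (n:ℝ) - 3 < μ := by linarith
  -- contradiction helper from unbalancedness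
  have contra : ∀ τ : Fin n → ℝ, (∀ i, τ i = 1 ∨ τ i = -1) →
      (∀ i j, A i j ≠ 0 → A i j = τ i * τ j) → False := by
    intro τ h1 h2
    obtain ⟨u, wk, -, hsg⟩ := hunb
    have h3 := walkSign_eq A τ h1 h2 wk
    rw [hsg] at h3
    rcases h1 u with h | h <;> rw [h] at h3 <;> norm_num at h3
  -- entry facts
  have hpm : ∀ i j, A i j ≠ 0 → A i j = 1 ∨ A i j = -1 := by
    intro i j h; rcases hval i j with h1 | h1 | h1
    · exact absurd h1 h
    · exact Or.inl h1
    · exact Or.inr h1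
  have habs : ∀ i j, |A i j| ≤ 1 := by
    intro i j; rcases hval i j with h1 | h1 | h1 <;> rw [h1] <;> norm_num
  -- max vertex
  obtain ⟨u₀, -, hmax⟩ := Finset.exists_max_image Finset.univ (fun i => |x i|)
    ⟨⟨0, by omega⟩, Finset.mem_univ _⟩
  have hmax' : ∀ i, |x i| ≤ |x u₀| := fun i => hmax i (Finset.mem_univ i)
  have hxu : x u₀ ≠ 0 := by
    intro h0
    apply hx
    funext i
    have := hmax' i
    rw [h0] at this
    simp only [abs_zero] at this
    exact abs_nonpos_iff.mp (by simpa using this)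
  set z : Fin n → ℝ := fun i => x i / x u₀ with hzdef
  have hz1 : z u₀ = 1 := div_self hxu
  have hzle : ∀ i, |z i| ≤ 1 := by
    intro i
    rw [hzdef]
    simp only [abs_div]
    exact div_le_one_of_le₀ (hmax' i) (abs_nonneg _)
  have hz : ∀ j, ∑ k, A j k * z k = μ * z j := by
    intro j
    have h1 : ∑ k, A j k * x k = μ * x j := by
      have h2 := congrFun he j
      simpa [Matrix.mulVec, dotProduct] using h2
    calc ∑ k, A j k * z k = (∑ k, A j k * x k) / x u₀ := by
          rw [Finset.sum_div]; exact Finset.sum_congr rfl (fun k _ => by rw [hzdef]; ring)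
      _ = μ * x j / x u₀ := by rw [h1]
      _ = μ * z j := by rw [hzdef]; ring
  -- neighborhood of u₀
  set N : Finset (Fin n) := Finset.univ.filter (fun k => A u₀ k ≠ 0) with hNdef
  have hNmem : ∀ k, k ∈ N ↔ A u₀ k ≠ 0 := by intro k; simp [hNdef]
  have hu₀N : u₀ ∉ N := by simp [hNmem, hdiag u₀]
  set y : Fin n → ℝ := fun k => A u₀ k * z k with hydef
  have hyabs : ∀ k, |y k| ≤ 1 := by
    intro k
    rw [hydef]
    simp only [abs_mul]
    calc |A u₀ k| * |z k| ≤ 1 * 1 := by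
          apply mul_le_mul (habs _ _) (hzle _) (abs_nonneg _) (by norm_num)
      _ = 1 := by norm_num
  have hyle : ∀ k, y k ≤ 1 := fun k => le_trans (le_abs_self _) (hyabs k)
  have hE1 : μ = ∑ k ∈ N, y k := by
    have h1 := hz u₀
    rw [hz1, mul_one] at h1
    rw [← h1, hNdef]
    symm
    apply Finset.sum_filter_of_ne
    intro k _ hk h0
    apply hk
    rw [hydef]
    simp [h0]
  have hμN : μ ≤ (N.card : ℝ) := by
    rw [hE1]
    calc ∑ k ∈ N, y k ≤ ∑ _k ∈ N, (1:ℝ) := Finset.sum_le_sum (fun k _ => hyle k)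
      _ = N.card := by simp
  -- the complement
  set C : Finset (Fin n) := Finset.univ.filter (fun k => k ≠ u₀ ∧ A u₀ k = 0) with hCdef
  have hNC : N.card + C.card = n - 1 := by
    have hdisj : Disjoint N C := by
      rw [Finset.disjoint_left]
      intro k hk hk2
      rw [hNmem] at hk
      rw [hCdef] at hk2
      simp at hk2
      exact hk hk2.2
    have hun : N ∪ C = Finset.univ.erase u₀ := by
      ext k
      simp only [Finset.mem_union, hNmem k, hCdef, Finset.mem_filter, Finset.mem_univ,
        true_and, Finset.mem_erase, and_true]
      constructor
      · rintro (h | ⟨h1, h2⟩)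
        · intro hk; rw [hk] at h; exact h (hdiag u₀)
        · exact h1
      · intro hne
        by_cases h : A u₀ k = 0
        · exact Or.inr ⟨hne, h⟩
        · exact Or.inl h
    have := Finset.card_union_of_disjoint hdisj
    rw [hun, Finset.card_erase_of_mem (Finset.mem_univ _)] at this
    simpa using this.symm
  -- case on C.card
  rcases Nat.lt_or_ge C.card 2 with hC2 | hC2
  swap
  · -- many non-neighbors: μ ≤ n - 3
    have h1 : N.card + 3 ≤ n := by omega
    have h2 : (N.card : ℝ) + 3 ≤ (n : ℝ) := by exact_mod_cast h1
    linarith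
  interval_cases hCc : C.card
  · -- C empty : u₀ dominates, balanced, contradiction
    have hall : ∀ k, k ≠ u₀ → A u₀ k ≠ 0 := by
      intro k h1 h2
      have : k ∈ C := by rw [hCdef]; simp [h1, h2]
      rw [Finset.card_eq_zero.mp hCc] at this
      simp at this
    apply contra (fun k => if k = u₀ then 1 else A u₀ k)
    · intro i
      by_cases h : i = u₀
      · simp [h]
      · simp only [if_neg h]; exact hpm _ _ (hall i h)
    · intro i j hij
      have hij' : i ≠ j := fun h => hij (by rw [h]; exact hdiag j)
      by_cases hi : i = u₀
      · subst hi
        rw [if_pos rfl, if_neg (Ne.symm hij'), one_mul]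
      · by_cases hj : j = u₀
        · subst hj
          rw [if_neg hi, if_pos rfl, mul_one, hsym]
        · rw [if_neg hi, if_neg hj]
          have h1 := sgn3 (A u₀ i) (A i j) (A j u₀) (hpm _ _ (hall i hi)) (hpm _ _ hij)
            (by rw [hsym j u₀]; exact hpm _ _ (hall j hj)) (htri u₀ i j)
          rw [h1, hsym j u₀]
  · -- C = {w} : the main case
    obtain ⟨w, hw⟩ := Finset.card_eq_one.mp hCc
    have hwC : w ∈ C := by rw [hw]; exact Finset.mem_singleton_self w
    have hwu : w ≠ u₀ ∧ A u₀ w = 0 := by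
      rw [hCdef] at hwC; simpa using hwC
    have hwN : w ∉ N := by rw [hNmem]; simp [hwu.2]
    have hNfull : ∀ k, k ≠ u₀ → k ≠ w → k ∈ N := by
      intro k h1 h2
      rw [hNmem]
      intro h3
      have : k ∈ C := by rw [hCdef]; simp [h1, h3]
      rw [hw] at this
      exact h2 (Finset.mem_singleton.mp this)
    have hNcard : N.card = n - 2 := by omega
    have hNcardR : (N.card : ℝ) = (n : ℝ) - 2 := by
      rw [hNcard]
      push_cast [Nat.cast_sub (by omega : 2 ≤ n)]
      ring
    have huniv : (Finset.univ : Finset (Fin n)) = insert u₀ (insert w N) := by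
      ext k
      simp only [Finset.mem_univ, true_iff, Finset.mem_insert]
      by_cases h1 : k = u₀
      · exact Or.inl h1
      · by_cases h2 : k = w
        · exact Or.inr (Or.inl h2)
        · exact Or.inr (Or.inr (hNfull k h1 h2))
    have hu₀iwN : u₀ ∉ insert w N := by
      simp only [Finset.mem_insert]
      push_neg
      exact ⟨Ne.symm hwu.1, hu₀N⟩
    have hσ : ∀ k ∈ N, A u₀ k = 1 ∨ A u₀ k = -1 := fun k hk => hpm _ _ ((hNmem k).mp hk)
    have hσ2 : ∀ k ∈ N, A u₀ k * A u₀ k = 1 := by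
      intro k hk; rcases hσ k hk with h | h <;> rw [h] <;> norm_num
    have hNN : ∀ i j, i ∈ N → j ∈ N → A i j ≠ 0 → A i j = A u₀ i * A u₀ j := by
      intro i j hi hj hij
      have h1 := sgn3 (A u₀ i) (A i j) (A j u₀) (hσ i hi) (hpm _ _ hij)
        (by rw [hsym j u₀]; exact hσ j hj) (htri u₀ i j)
      rw [h1, hsym j u₀]
    set P : Finset (Fin n) := N.filter (fun k => A u₀ k * A k w = 1) with hPdef
    set Q : Finset (Fin n) := N.filter (fun k => A u₀ k * A k w = -1) with hQdef
    have hPN : P ⊆ N := Finset.filter_subset _ _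
    have hQN : Q ⊆ N := Finset.filter_subset _ _
    have hPmem : ∀ k ∈ P, A u₀ k * A k w = 1 := fun k hk => (Finset.mem_filter.mp hk).2
    have hQmem : ∀ k ∈ Q, A u₀ k * A k w = -1 := fun k hk => (Finset.mem_filter.mp hk).2
    have hPQdisj : Disjoint P Q := by
      rw [Finset.disjoint_left]
      intro k hk hk2
      have := hPmem k hk
      have := hQmem k hk2
      linarith
    have htrich : ∀ k ∈ N, k ∈ P ∨ k ∈ Q ∨ A k w = 0 := by
      intro k hk
      rcases hval k w with h | h | h
      · exact Or.inr (Or.inr h)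
      · rcases hσ k hk with h1 | h1
        · exact Or.inl (Finset.mem_filter.mpr ⟨hk, by rw [h, h1]; norm_num⟩)
        · exact Or.inr (Or.inl (Finset.mem_filter.mpr ⟨hk, by rw [h, h1]; norm_num⟩))
      · rcases hσ k hk with h1 | h1
        · exact Or.inr (Or.inl (Finset.mem_filter.mpr ⟨hk, by rw [h, h1]; norm_num⟩))
        · exact Or.inl (Finset.mem_filter.mpr ⟨hk, by rw [h, h1]; norm_num⟩)
    -- A j w in terms of sign for members of P, Q
    have hPw : ∀ k ∈ P, A k w = A u₀ k := by
      intro k hk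
      have h1 := hPmem k hk
      rcases hσ k (hPN hk) with h | h <;> rw [h] at h1 ⊢ <;> linarith
    have hQw : ∀ k ∈ Q, A k w = -(A u₀ k) := by
      intro k hk
      have h1 := hQmem k hk
      rcases hσ k (hQN hk) with h | h <;> rw [h] at h1 ⊢ <;> linarith
    -- no P-Q edges
    have hPQ0 : ∀ j ∈ P, ∀ k ∈ Q, A j k = 0 := by
      intro j hj k hk
      by_contra hjk
      apply htri j k w
      rw [hNN j k (hPN hj) (hQN hk) hjk, hQw k hk, hsym w j, hPw j hj]
      have h1 := hσ2 j (hPN hj)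
      have h2 := hσ2 k (hQN hk)
      nlinarith
    -- P and Q nonempty (else balanced)
    have hτN : ∀ ε : ℝ, ε = 1 ∨ ε = -1 →
        (∀ i ∈ N, A i w ≠ 0 → A i w = A u₀ i * ε) → False := by
      intro ε hε hcond
      apply contra (fun k => if k = u₀ then 1 else if k = w then ε else A u₀ k)
      · intro i
        by_cases h1 : i = u₀
        · simp [h1]
        · by_cases h2 : i = w
          · simp only [if_neg h1, if_pos h2]
            exact hε
          · simp only [if_neg h1, if_neg h2]
            exact hσ i (hNfull i h1 h2)
      · intro i j hij
        have hij' : i ≠ j := fun h => hij (by rw [h]; exact hdiag j)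
        by_cases hi : i = u₀
        · subst hi
          rw [if_pos rfl, if_neg (Ne.symm hij'), one_mul]
          by_cases hj : j = w
          · exact absurd (hj ▸ hij) (by simp [hwu.2])
          · rw [if_neg hj]
        · by_cases hj : j = u₀
          · subst hj
            rw [if_neg hi, if_pos rfl, mul_one, hsym]
            by_cases hi2 : i = w
            · exact absurd (hi2 ▸ hij) (by rw [hsym]; simp [hwu.2])
            · rw [if_neg hi2]
          · by_cases hiw : i = w
            · by_cases hjw : j = w
              · exact absurd (hiw.trans hjw.symm) hij'
              · rw [if_neg hi, if_pos hiw, if_neg hj, if_neg hjw]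
                have hjN : j ∈ N := hNfull j hj hjw
                have h3 : A j w ≠ 0 := by rw [hsym, ← hiw]; exact hij
                rw [hiw, hsym w j, hcond j hjN h3, mul_comm (A u₀ j) ε]
            · by_cases hjw : j = w
              · subst hjw
                rw [if_neg hi, if_neg hiw, if_neg hj, if_pos rfl]
                exact hcond i (hNfull i hi hiw) hij
              · rw [if_neg hi, if_neg hiw, if_neg hj, if_neg hjw]
                exact hNN i j (hNfull i hi hiw) (hNfull j hj hjw) hij
    have hPne : P.Nonempty := by
      rw [Finset.nonempty_iff_ne_empty]
      intro hP
      apply hτN (-1) (Or.inr rfl)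
      intro i hi hiw
      rcases htrich i hi with h | h | h
      · rw [hP] at h; simp at h
      · have := hQw i h
        rw [this]; ring
      · exact absurd h hiw
    have hQne : Q.Nonempty := by
      rw [Finset.nonempty_iff_ne_empty]
      intro hQ
      apply hτN 1 (Or.inl rfl)
      intro i hi hiw
      rcases htrich i hi with h | h | h
      · rw [hPw i h, mul_one]
      · rw [hQ] at h; simp at h
      · exact absurd h hiw
    -- y is nonnegative on N
    have hy0 : ∀ k ∈ N, 0 ≤ y k := by
      intro k hk
      have hc1 : ((N.erase k).card : ℝ) = (n:ℝ) - 3 := by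
        rw [Finset.card_erase_of_mem hk, hNcard]
        have h1 : n - 2 - 1 = n - 3 := by omega
        rw [h1]
        push_cast [Nat.cast_sub (by omega : 3 ≤ n)]
        ring
      have h1 : ∑ j ∈ N.erase k, y j ≤ (n:ℝ) - 3 := by
        calc ∑ j ∈ N.erase k, y j ≤ ∑ _j ∈ N.erase k, (1:ℝ) :=
              Finset.sum_le_sum (fun j _ => hyle j)
          _ = ((N.erase k).card : ℝ) := by simp
          _ = (n:ℝ) - 3 := hc1
      have h2 : y k + ∑ j ∈ N.erase k, y j = μ := by
        rw [hE1]; exact Finset.add_sum_erase N y hk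
      linarith
    -- the key per-vertex inequality
    have hkey : ∀ (P' Q' : Finset (Fin n)) (ε : ℝ), P' ⊆ N → Q' ⊆ N → Disjoint P' Q' →
        (∀ k ∈ P', A u₀ k * A k w = ε) → (∀ j ∈ P', ∀ k ∈ Q', A j k = 0) →
        ∀ j ∈ P', μ * y j + y j + ∑ k ∈ Q', y k ≤ 1 + μ + ε * z w := by
      intro P' Q' ε hP'N hQ'N hdisj hmem hedge0 j hj
      have hjN : j ∈ N := hP'N hj
      have hju : j ≠ u₀ := fun h => hu₀N (h ▸ hjN)
      have hjw : j ≠ w := fun h => hwN (h ▸ hjN)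
      have hjQ' : j ∉ Q' := Finset.disjoint_left.mp hdisj hj
      set g : Fin n → ℝ := fun k =>
        if k = u₀ then 1 else if k = w then ε * z w else if k ∈ Q' ∨ k = j then 0 else y k
        with hgdef
      have h1 : μ * y j = ∑ k, A u₀ j * (A j k * z k) := by
        have h2 : μ * y j = A u₀ j * (μ * z j) := by rw [hydef]; ring
        rw [h2, ← hz j, Finset.mul_sum]
      have hfg : ∀ k, A u₀ j * (A j k * z k) ≤ g k := by
        intro k
        by_cases hk1 : k = u₀
        · have hgk : g k = 1 := by simp [hgdef, hk1]
          rw [hgk, hk1, hsym j u₀, hz1, mul_one]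
          exact le_of_eq (hσ2 j hjN)
        · by_cases hk2 : k = w
          · have hgk : g k = ε * z w := by simp [hgdef, hk1, hk2, hwu.1]
            rw [hgk, hk2]
            have h3 : A u₀ j * (A j w * z w) = (A u₀ j * A j w) * z w := by ring
            rw [h3, hmem j hj]
          · have hkN : k ∈ N := hNfull k hk1 hk2
            have hgk : g k = if k ∈ Q' ∨ k = j then 0 else y k := by
              simp [hgdef, hk1, hk2]
            rw [hgk]
            by_cases hk3 : k ∈ Q' ∨ k = j
            · rw [if_pos hk3]
              rcases hk3 with hk3 | hk3
              · rw [hedge0 j hj k hk3]; simp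
              · subst hk3; rw [hdiag]; simp
            · rw [if_neg hk3]
              by_cases hk4 : A j k = 0
              · rw [hk4]
                simpa using hy0 k hkN
              · rw [hNN j k hjN hkN hk4]
                have h4 : A u₀ j * (A u₀ j * A u₀ k * z k) = (A u₀ j * A u₀ j) * y k := by
                  rw [hydef]; ring
                rw [h4, hσ2 j hjN, one_mul]
      have h5 : ∑ k, A u₀ j * (A j k * z k) ≤ ∑ k, g k :=
        Finset.sum_le_sum (fun k _ => hfg k)
      have hinsub : insert j Q' ⊆ N := by
        rw [Finset.insert_subset_iff]
        exact ⟨hjN, hQ'N⟩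
      have h6 : ∑ k, g k = 1 + ε * z w + (μ - y j - ∑ k ∈ Q', y k) := by
        rw [huniv, Finset.sum_insert hu₀iwN, Finset.sum_insert hwN]
        have e1 : g u₀ = 1 := by simp [hgdef]
        have e2 : g w = ε * z w := by simp [hgdef, hwu.1]
        have e3 : ∑ k ∈ N, g k = μ - y j - ∑ k ∈ Q', y k := by
          have e4 : ∑ k ∈ N, g k =
              ∑ k ∈ N, (if k ∈ Q' ∨ k = j then 0 else y k) := by
            apply Finset.sum_congr rfl
            intro k hk
            have hk1 : k ≠ u₀ := fun h => hu₀N (h ▸ hk)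
            have hk2 : k ≠ w := fun h => hwN (h ▸ hk)
            have hgk2 : g k = if k ∈ Q' ∨ k = j then (0:ℝ) else y k := by
              simp [hgdef, hk1, hk2]
            rw [hgk2]
          have e5 : ∑ k ∈ N, (if k ∈ Q' ∨ k = j then (0:ℝ) else y k) =
              ∑ k ∈ N \ insert j Q', y k := by
            rw [← Finset.sum_sdiff hinsub]
            have e6 : ∑ k ∈ insert j Q', (if k ∈ Q' ∨ k = j then (0:ℝ) else y k) = 0 := by
              apply Finset.sum_eq_zero
              intro k hk
              rcases Finset.mem_insert.mp hk with h | h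
              · rw [if_pos (Or.inr h)]
              · rw [if_pos (Or.inl h)]
            have e7 : ∑ k ∈ N \ insert j Q', (if k ∈ Q' ∨ k = j then (0:ℝ) else y k) =
                ∑ k ∈ N \ insert j Q', y k := by
              apply Finset.sum_congr rfl
              intro k hk
              have := Finset.mem_sdiff.mp hk
              have h8 : ¬(k ∈ Q' ∨ k = j) := by
                intro h9
                apply this.2
                rcases h9 with h9 | h9
                · exact Finset.mem_insert_of_mem h9
                · rw [h9]; exact Finset.mem_insert_self _ _
              rw [if_neg h8]
            rw [e6, e7, add_zero]
          have e8 : ∑ k ∈ N \ insert j Q', y k = μ - y j - ∑ k ∈ Q', y k := by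
            have e9 : ∑ k ∈ N \ insert j Q', y k + ∑ k ∈ insert j Q', y k = ∑ k ∈ N, y k :=
              Finset.sum_sdiff hinsub
            rw [Finset.sum_insert hjQ'] at e9
            rw [← hE1] at e9
            linarith
          rw [e4, e5, e8]
        rw [e1, e2, e3]
        ring
      have h7 := h1 ▸ (h6 ▸ h5)
      linarith
    -- sum the key inequality over P and над Q
    set SP : ℝ := ∑ k ∈ P, y k with hSPdef
    set SQ : ℝ := ∑ k ∈ Q, y k with hSQdef
    have hSP0 : 0 ≤ SP := Finset.sum_nonneg (fun k hk => hy0 k (hPN hk))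
    have hSQ0 : 0 ≤ SQ := Finset.sum_nonneg (fun k hk => hy0 k (hQN hk))
    have hQP0 : ∀ j ∈ Q, ∀ k ∈ P, A j k = 0 := by
      intro j hj k hk
      rw [hsym]
      exact hPQ0 k hk j hj
    have HP : μ * SP + SP + (P.card : ℝ) * SQ ≤ (P.card : ℝ) * (1 + μ + z w) := by
      have h1 := Finset.sum_le_sum
        (fun j hj => hkey P Q 1 hPN hQN hPQdisj hPmem hPQ0 j hj)
      rw [Finset.sum_add_distrib, Finset.sum_add_distrib, ← Finset.mul_sum,
        Finset.sum_const, Finset.sum_const, nsmul_eq_mul, nsmul_eq_mul, one_mul] at h1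
      rw [hSPdef, hSQdef]
      convert h1 using 2 <;> ring
    have HQ : μ * SQ + SQ + (Q.card : ℝ) * SP ≤ (Q.card : ℝ) * (1 + μ - z w) := by
      have h1 := Finset.sum_le_sum
        (fun j hj => hkey Q P (-1) hQN hPN hPQdisj.symm hQmem hQP0 j hj)
      rw [Finset.sum_add_distrib, Finset.sum_add_distrib, ← Finset.mul_sum,
        Finset.sum_const, Finset.sum_const, nsmul_eq_mul, nsmul_eq_mul] at h1
      rw [hSPdef, hSQdef]
      have h2 : (1:ℝ) + μ + (-1) * z w = 1 + μ - z w := by ring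
      rw [h2] at h1
      convert h1 using 2 <;> ring
    -- the global sum bound
    have hPQsub : P ∪ Q ⊆ N := Finset.union_subset hPN hQN
    have hsum : μ ≤ SP + SQ + ((n:ℝ) - 2 - (P.card : ℝ) - (Q.card : ℝ)) := by
      have h1 : ∑ k ∈ N \ (P ∪ Q), y k + ∑ k ∈ P ∪ Q, y k = ∑ k ∈ N, y k :=
        Finset.sum_sdiff hPQsub
      have h2 : ∑ k ∈ P ∪ Q, y k = SP + SQ := by
        rw [hSPdef, hSQdef, Finset.sum_union hPQdisj]
      have h3 : ∑ k ∈ N \ (P ∪ Q), y k ≤ ((N \ (P ∪ Q)).card : ℝ) := by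
        calc ∑ k ∈ N \ (P ∪ Q), y k ≤ ∑ _k ∈ N \ (P ∪ Q), (1:ℝ) :=
              Finset.sum_le_sum (fun k _ => hyle k)
          _ = _ := by simp
      have h4 : ((N \ (P ∪ Q)).card : ℝ) = (n:ℝ) - 2 - (P.card : ℝ) - (Q.card : ℝ) := by
        rw [Finset.card_sdiff_of_subset hPQsub, Finset.card_union_of_disjoint hPQdisj]
        have h5 : P.card + Q.card ≤ N.card := by
          rw [← Finset.card_union_of_disjoint hPQdisj]
          exact Finset.card_le_card hPQsub
        push_cast [Nat.cast_sub h5]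
        rw [hNcardR]
        ring
      rw [hE1, ← h1, h2]
      linarith
    -- final contradiction
    have hp1 : (1:ℝ) ≤ (P.card : ℝ) := by
      have := Finset.card_pos.mpr hPne
      exact_mod_cast this
    have hq1 : (1:ℝ) ≤ (Q.card : ℝ) := by
      have := Finset.card_pos.mpr hQne
      exact_mod_cast this
    have htw : -1 ≤ z w ∧ z w ≤ 1 := abs_le.mp (hzle w)
    exact final_arith (n:ℝ) μ s (P.card:ℝ) (Q.card:ℝ) SP SQ (z w) hn3 hs0 hs2 hcon
      hp1 hq1 hSP0 hSQ0 htw.1 htw.2 HP HQ hsum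

/-- An unbalanced signed graph on `n` vertices with no negative triangle has
`λ₁ ≤ (√(n²-8) + n - 4)/2 < n - 2`. -/
theorem stmt15 {n : ℕ} (hn : 3 ≤ n) (A : Matrix (Fin n) (Fin n) ℝ) (hA : IsSignedAdj A)
    (hunb : IsUnbalanced A) (htri : ∀ i j k : Fin n, A i j * A j k * A k i ≠ -1) :
    lam1 A ≤ (Real.sqrt ((n : ℝ) ^ 2 - 8) + (n : ℝ) - 4) / 2 ∧
      (Real.sqrt ((n : ℝ) ^ 2 - 8) + (n : ℝ) - 4) / 2 < (n : ℝ) - 2 := by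
  have hn3 : (3:ℝ) ≤ (n:ℝ) := by exact_mod_cast hn
  have hs0 : 0 ≤ Real.sqrt ((n:ℝ) ^ 2 - 8) := Real.sqrt_nonneg _
  have hsq : Real.sqrt ((n:ℝ) ^ 2 - 8) ^ 2 = (n:ℝ) ^ 2 - 8 :=
    Real.sq_sqrt (by nlinarith)
  have hsge : (n:ℝ) - 2 ≤ Real.sqrt ((n:ℝ) ^ 2 - 8) := by
    nlinarith [hsq, hs0, hn3]
  have hlt : Real.sqrt ((n:ℝ) ^ 2 - 8) < (n:ℝ) := by
    have h1 : Real.sqrt ((n:ℝ) ^ 2 - 8) < Real.sqrt ((n:ℝ) ^ 2) :=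
      Real.sqrt_lt_sqrt (by nlinarith) (by nlinarith)
    rwa [Real.sqrt_sq (by linarith)] at h1
  constructor
  · unfold lam1
    apply Real.sSup_le
    · rintro μ ⟨x, hx, he⟩
      exact eig_bound hn A hA hunb htri hx he
    · linarith
  · linarith
end
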